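/- Fix d_A, d_B ≥ 1, a unit vector ψ ∈ ℂ² ⊗ ℂ^{d_A} ⊗ ℂ^{d_B}, and p_err ≥ 0. Let V_0, V_1 and V'_0, V'_1 be two pairs of orthogonal projections on ℂ² with V_0 + V_1 = I and V'_0 + V'_1 = I. Let {A_a}_{a∈{0,1,⊥}}, {A'_a}_{a∈{0,1,⊥}} be POVMs on ℂ^{d_A} and {B_a}_{a∈{0,1,⊥}}, {B'_a}_{a∈{0,1,⊥}} POVMs on ℂ^{d_B}. Assume: (i) ⟨I·A_a·B_b⟩_ψ = 0 and ⟨I·A'_a·B'_b⟩_ψ = 0 for all a ≠ b in {0,1,⊥}; (ii) ⟨V_1·A_0·B_0⟩_ψ ≤ p_err·⟨V_1·(A_0+A_1)·(B_0+B_1)⟩_ψ and ⟨V_0·A_1·B_1⟩_ψ ≤ p_err·⟨V_0·(A_0+A_1)·(B_0+B_1)⟩_ψ, and the same two inequalities with (V', A', B') in place of (V, A, B). Then Σ_{a,b∈{0,1}} (2 − ‖V_a + V'_b‖_op)·⟨I·A_a·B'_b⟩_ψ ≤ p_err·( Σ_{a∈{0,1}} ⟨I·A_a·B_a⟩_ψ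 + Σ_{a∈{0,1}} ⟨I·A'_a·B'_a⟩_ψ ). -/

import Mathlib

open Matrix Kronecker BigOperators
open scoped ComplexOrder

noncomputable section

/-- ⟨ψ, (V ⊗ A ⊗ B) ψ⟩ as a real number. -/
def exval {dA dB : ℕ} (χ : Fin 2 × Fin dA × Fin dB → ℂ)
    (V : Matrix (Fin 2) (Fin 2) ℂ) (A : Matrix (Fin dA) (Fin dA) ℂ)
    (B : Matrix (Fin dB) (Fin dB) ℂ) : ℝ :=
  (star χ ⬝ᵥ (V ⊗ₖ (A ⊗ₖ B)).mulVec χ).re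

/-- A POVM with outcomes {0, 1, ⊥} (⊥ encoded as the index 2): three positive
semidefinite matrices summing to the identity. -/
def IsPOVM {d : ℕ} (A : Fin 3 → Matrix (Fin d) (Fin d) ℂ) : Prop :=
  (∀ a, (A a).PosSemidef) ∧ A 0 + A 1 + A 2 = 1

/-- Operator (spectral) norm of a complex matrix. -/
def opNorm {ι : Type*} [Fintype ι] [DecidableEq ι] (M : Matrix ι ι ℂ) : ℝ :=
  ‖Matrix.toEuclideanCLM (𝕜 := ℂ) M‖

/-! ### Auxiliary lemmas -/

lemma qpv_kron_conjT {l m n p : Type*} (M : Matrix l m ℂ) (N : Matrix n p ℂ) :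
    (M ⊗ₖ N)ᴴ = Mᴴ ⊗ₖ Nᴴ := by
  ext ⟨i, j⟩ ⟨k, l⟩
  simp [conjTranspose_apply, kroneckerMap_apply, mul_comm]

lemma qpv_kron_psd {m n : Type*} [Fintype m] [Fintype n] [DecidableEq m] [DecidableEq n]
    {M : Matrix m m ℂ} {N : Matrix n n ℂ}
    (hM : M.PosSemidef) (hN : N.PosSemidef) : (M ⊗ₖ N).PosSemidef := by
  exact hM.kronecker hN

section ExvalLemmas

variable {dA dB : ℕ} (ψ : Fin 2 × Fin dA × Fin dB → ℂ)

lemma qpv_add_V (V W : Matrix (Fin 2) (Fin 2) ℂ) (A : Matrix (Fin dA) (Fin dA) ℂ)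
    (B : Matrix (Fin dB) (Fin dB) ℂ) :
    exval ψ (V + W) A B = exval ψ V A B + exval ψ W A B := by
  unfold exval
  rw [add_kronecker, add_mulVec, dotProduct_add, Complex.add_re]

lemma qpv_add_A (V : Matrix (Fin 2) (Fin 2) ℂ) (A A' : Matrix (Fin dA) (Fin dA) ℂ)
    (B : Matrix (Fin dB) (Fin dB) ℂ) :
    exval ψ V (A + A') B = exval ψ V A B + exval ψ V A' B := by
  unfold exval
  rw [add_kronecker, kronecker_add, add_mulVec, dotProduct_add, Complex.add_re]

lemma qpv_add_B (V : Matrix (Fin 2) (Fin 2) ℂ) (A : Matrix (Fin dA) (Fin dA) ℂ)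
    (B B' : Matrix (Fin dB) (Fin dB) ℂ) :
    exval ψ V A (B + B') = exval ψ V A B + exval ψ V A B' := by
  unfold exval
  rw [kronecker_add, kronecker_add, add_mulVec, dotProduct_add, Complex.add_re]

lemma qpv_smul (r : ℝ) (V : Matrix (Fin 2) (Fin 2) ℂ) (A : Matrix (Fin dA) (Fin dA) ℂ)
    (B : Matrix (Fin dB) (Fin dB) ℂ) :
    exval ψ ((r : ℂ) • V) A B = r * exval ψ V A B := by
  unfold exval
  rw [smul_kronecker, smul_mulVec, dotProduct_smul, smul_eq_mul, Complex.re_ofReal_mul]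

lemma qpv_nonneg {V : Matrix (Fin 2) (Fin 2) ℂ} {A : Matrix (Fin dA) (Fin dA) ℂ}
    {B : Matrix (Fin dB) (Fin dB) ℂ}
    (hV : V.PosSemidef) (hA : A.PosSemidef) (hB : B.PosSemidef) :
    0 ≤ exval ψ V A B :=
  (Complex.nonneg_iff.mp ((qpv_kron_psd hV (qpv_kron_psd hA hB)).dotProduct_mulVec_nonneg ψ)).1

lemma qpv_mono_V {V W : Matrix (Fin 2) (Fin 2) ℂ} {A : Matrix (Fin dA) (Fin dA) ℂ}
    {B : Matrix (Fin dB) (Fin dB) ℂ}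
    (h : (W - V).PosSemidef) (hA : A.PosSemidef) (hB : B.PosSemidef) :
    exval ψ V A B ≤ exval ψ W A B := by
  have h1 := qpv_add_V ψ V (W - V) A B
  rw [show V + (W - V) = W by abel] at h1
  have h2 := qpv_nonneg ψ h hA hB
  linarith

lemma qpv_mono_A {V : Matrix (Fin 2) (Fin 2) ℂ} {A A' : Matrix (Fin dA) (Fin dA) ℂ}
    {B : Matrix (Fin dB) (Fin dB) ℂ}
    (h : (A' - A).PosSemidef) (hV : V.PosSemidef) (hB : B.PosSemidef) :
    exval ψ V A B ≤ exval ψ V A' B := by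
  have h1 := qpv_add_A ψ V A (A' - A) B
  rw [show A + (A' - A) = A' by abel] at h1
  have h2 := qpv_nonneg ψ hV h hB
  linarith

lemma qpv_mono_B {V : Matrix (Fin 2) (Fin 2) ℂ} {A : Matrix (Fin dA) (Fin dA) ℂ}
    {B B' : Matrix (Fin dB) (Fin dB) ℂ}
    (h : (B' - B).PosSemidef) (hV : V.PosSemidef) (hA : A.PosSemidef) :
    exval ψ V A B ≤ exval ψ V A B' := by
  have h1 := qpv_add_B ψ V A B (B' - B)
  rw [show B + (B' - B) = B' by abel] at h1
  have h2 := qpv_nonneg ψ hV hA h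
  linarith

end ExvalLemmas

/-- For a Hermitian matrix `M`, the quadratic form `star x ⬝ᵥ M *ᵥ x` is real. -/
lemma qpv_quadform_real {n : Type*} [Fintype n] {M : Matrix n n ℂ} (hM : M.IsHermitian)
    (x : n → ℂ) : (star x ⬝ᵥ M *ᵥ x).im = 0 := by
  have h : (starRingEnd ℂ) (star x ⬝ᵥ M *ᵥ x) = star x ⬝ᵥ M *ᵥ x := by
    have h1 : star (star x ⬝ᵥ M *ᵥ x) = star (M *ᵥ x) ⬝ᵥ x := (star_dotProduct _ _).symm
    calc (starRingEnd ℂ) (star x ⬝ᵥ M *ᵥ x) = star (M *ᵥ x) ⬝ᵥ x := h1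
      _ = (star x ᵥ* Mᴴ) ⬝ᵥ x := by rw [star_mulVec]
      _ = star x ⬝ᵥ (Mᴴ *ᵥ x) := (dotProduct_mulVec _ _ _).symm
      _ = star x ⬝ᵥ M *ᵥ x := by rw [hM.eq]
  exact Complex.conj_eq_iff_im.mp h

/-- Quadratic form bound via the operator norm. -/
lemma qpv_quadform_le {n : Type*} [Fintype n] [DecidableEq n] (M : Matrix n n ℂ) (x : n → ℂ) :
    (star x ⬝ᵥ M *ᵥ x).re ≤ opNorm M * (star x ⬝ᵥ x).re := by
  set y : EuclideanSpace ℂ n := (WithLp.equiv 2 _).symm x with hy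
  have hTy : Matrix.toEuclideanCLM (𝕜 := ℂ) M y = (WithLp.equiv 2 _).symm (M *ᵥ x) := by
    rfl
  have hinner : (inner ℂ y (Matrix.toEuclideanCLM (𝕜 := ℂ) M y) : ℂ) = star x ⬝ᵥ M *ᵥ x := by
    rw [hTy, hy]; exact dotProduct_comm _ _
  have hself : (star x ⬝ᵥ x : ℂ) = ((‖y‖ : ℂ)) ^ 2 := by
    rw [dotProduct_comm, show x ⬝ᵥ star x = inner ℂ y y from rfl, inner_self_eq_norm_sq_to_K]
    norm_num
  have hb : ‖(inner ℂ y (Matrix.toEuclideanCLM (𝕜 := ℂ) M y) : ℂ)‖ ≤ opNorm M * ‖y‖ ^ 2 := by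
    calc ‖(inner ℂ y (Matrix.toEuclideanCLM (𝕜 := ℂ) M y) : ℂ)‖
        ≤ ‖y‖ * ‖Matrix.toEuclideanCLM (𝕜 := ℂ) M y‖ := norm_inner_le_norm _ _
      _ ≤ ‖y‖ * (opNorm M * ‖y‖) := by
          have := (Matrix.toEuclideanCLM (𝕜 := ℂ) M).le_opNorm y
          exact mul_le_mul_of_nonneg_left this (norm_nonneg _)
      _ = opNorm M * ‖y‖ ^ 2 := by ring
  have hre : (star x ⬝ᵥ M *ᵥ x).re ≤ ‖(inner ℂ y (Matrix.toEuclideanCLM (𝕜 := ℂ) M y) : ℂ)‖ := by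
    rw [hinner]; exact Complex.re_le_norm _
  have hxre : (star x ⬝ᵥ x).re = ‖y‖ ^ 2 := by
    rw [hself, ← Complex.ofReal_pow]; exact Complex.ofReal_re _
  rw [hxre]
  exact le_trans hre hb

/-- For Hermitian `M`, `‖M‖ • 1 - M` is positive semidefinite. -/
lemma qpv_opNorm_smul_one_sub_psd {n : Type*} [Fintype n] [DecidableEq n]
    {M : Matrix n n ℂ} (hM : M.IsHermitian) :
    (((opNorm M : ℝ) : ℂ) • 1 - M).PosSemidef := by
  refine PosSemidef.of_dotProduct_mulVec_nonneg ?_ ?_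
  · unfold Matrix.IsHermitian
    rw [conjTranspose_sub, conjTranspose_smul, conjTranspose_one, hM.eq]
    norm_num
  · intro x
    rw [sub_mulVec, dotProduct_sub, smul_mulVec, one_mulVec, dotProduct_smul,
      smul_eq_mul]
    rw [Complex.nonneg_iff]
    constructor
    · simp only [Complex.sub_re, Complex.re_ofReal_mul]
      have := qpv_quadform_le M x
      linarith
    · have h1 : (star x ⬝ᵥ x).im = 0 := qpv_quadform_real isHermitian_one x |>.symm ▸ by
        simpa using qpv_quadform_real (isHermitian_one (A := n) (α := ℂ)) x
      have h2 := qpv_quadform_real hM x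
      simp [Complex.sub_im, Complex.mul_im, h1, h2]

end

noncomputable section

lemma qpv_key {dA dB : ℕ} (ψ : Fin 2 × Fin dA × Fin dB → ℂ)
    (P P2 Q Q2 : Matrix (Fin 2) (Fin 2) ℂ)
    (hP : P.IsHermitian) (hQ : Q.IsHermitian)
    (hPs : P + P2 = 1) (hQs : Q + Q2 = 1)
    {X : Matrix (Fin dA) (Fin dA) ℂ} {Y : Matrix (Fin dB) (Fin dB) ℂ}
    (hX : X.PosSemidef) (hY : Y.PosSemidef) :
    (2 - opNorm (P + Q)) * exval ψ 1 X Y ≤ exval ψ P2 X Y + exval ψ Q2 X Y := by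
  set c := opNorm (P + Q) with hc
  have h2 : (P2 + Q2) - ((2 - c : ℝ) : ℂ) • 1 = ((c : ℝ) : ℂ) • 1 - (P + Q) := by
    have hP2 : P2 = 1 - P := by rw [← hPs]; abel
    have hQ2 : Q2 = 1 - Q := by rw [← hQs]; abel
    have h2s : ((2 : ℂ)) • (1 : Matrix (Fin 2) (Fin 2) ℂ) = 1 + 1 := two_smul ℂ 1
    rw [hP2, hQ2]
    push_cast
    rw [sub_smul, h2s]
    abel
  have hpsd : ((P2 + Q2) - ((2 - c : ℝ) : ℂ) • 1).PosSemidef := by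
    rw [h2]; exact qpv_opNorm_smul_one_sub_psd (hP.add hQ)
  have hmono := qpv_mono_V ψ hpsd hX hY
  rw [qpv_smul, qpv_add_V] at hmono
  exact hmono

theorem perr_constraint_qpv {dA dB : ℕ} (hdA : 1 ≤ dA) (hdB : 1 ≤ dB)
    (ψ : Fin 2 × Fin dA × Fin dB → ℂ) (hψ : ∑ i, ‖ψ i‖ ^ 2 = 1)
    (perr : ℝ) (hperr : 0 ≤ perr)
    (V V' : Fin 2 → Matrix (Fin 2) (Fin 2) ℂ)
    (hVproj : ∀ a, (V a)ᴴ = V a ∧ V a * V a = V a)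
    (hV'proj : ∀ a, (V' a)ᴴ = V' a ∧ V' a * V' a = V' a)
    (hVsum : V 0 + V 1 = 1) (hV'sum : V' 0 + V' 1 = 1)
    (A A' : Fin 3 → Matrix (Fin dA) (Fin dA) ℂ)
    (B B' : Fin 3 → Matrix (Fin dB) (Fin dB) ℂ)
    (hA : IsPOVM A) (hA' : IsPOVM A') (hB : IsPOVM B) (hB' : IsPOVM B')
    (hzero : ∀ a b : Fin 3, a ≠ b → exval ψ 1 (A a) (B b) = 0)
    (hzero' : ∀ a b : Fin 3, a ≠ b → exval ψ 1 (A' a) (B' b) = 0)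
    (herr1 : exval ψ (V 1) (A 0) (B 0) ≤
      perr * exval ψ (V 1) (A 0 + A 1) (B 0 + B 1))
    (herr2 : exval ψ (V 0) (A 1) (B 1) ≤
      perr * exval ψ (V 0) (A 0 + A 1) (B 0 + B 1))
    (herr1' : exval ψ (V' 1) (A' 0) (B' 0) ≤
      perr * exval ψ (V' 1) (A' 0 + A' 1) (B' 0 + B' 1))
    (herr2' : exval ψ (V' 0) (A' 1) (B' 1) ≤
      perr * exval ψ (V' 0) (A' 0 + A' 1) (B' 0 + B' 1)) :
    ∑ a : Fin 2, ∑ b : Fin 2, (2 - opNorm (V a + V' b)) *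
        exval ψ 1 (A a.castSucc) (B' b.castSucc) ≤
      perr * ((∑ a : Fin 2, exval ψ 1 (A a.castSucc) (B a.castSucc)) +
        ∑ a : Fin 2, exval ψ 1 (A' a.castSucc) (B' a.castSucc)) := by
  obtain ⟨pA, hAsum⟩ := hA
  obtain ⟨pA', hA'sum⟩ := hA'
  obtain ⟨pB, hBsum⟩ := hB
  obtain ⟨pB', hB'sum⟩ := hB'
  have pV : ∀ a, (V a).PosSemidef := by
    intro a
    obtain ⟨h1, h2⟩ := hVproj a
    have h3 : V a = (V a)ᴴ * V a := by rw [h1, h2]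
    rw [h3]; exact posSemidef_conjTranspose_mul_self _
  have pV' : ∀ a, (V' a).PosSemidef := by
    intro a
    obtain ⟨h1, h2⟩ := hV'proj a
    have h3 : V' a = (V' a)ᴴ * V' a := by rw [h1, h2]
    rw [h3]; exact posSemidef_conjTranspose_mul_self _
  have hV1c : (1 : Matrix (Fin 2) (Fin 2) ℂ) - V 0 = V 1 := by rw [← hVsum]; abel
  have hV0c : (1 : Matrix (Fin 2) (Fin 2) ℂ) - V 1 = V 0 := by rw [← hVsum]; abel
  have hV'1c : (1 : Matrix (Fin 2) (Fin 2) ℂ) - V' 0 = V' 1 := by rw [← hV'sum]; abel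
  have hV'0c : (1 : Matrix (Fin 2) (Fin 2) ℂ) - V' 1 = V' 0 := by rw [← hV'sum]; abel
  have pc0 : ((1 : Matrix (Fin 2) (Fin 2) ℂ) - V 0).PosSemidef := hV1c ▸ pV 1
  have pc1 : ((1 : Matrix (Fin 2) (Fin 2) ℂ) - V 1).PosSemidef := hV0c ▸ pV 0
  have pc0' : ((1 : Matrix (Fin 2) (Fin 2) ℂ) - V' 0).PosSemidef := hV'1c ▸ pV' 1
  have pc1' : ((1 : Matrix (Fin 2) (Fin 2) ℂ) - V' 1).PosSemidef := hV'0c ▸ pV' 0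
  -- cross-zero lemmas
  have czero : ∀ (W : Matrix (Fin 2) (Fin 2) ℂ), W.PosSemidef →
      ((1 : Matrix (Fin 2) (Fin 2) ℂ) - W).PosSemidef →
      ∀ a b : Fin 3, a ≠ b → exval ψ W (A a) (B b) = 0 := by
    intro W hW hW' a b hab
    refine le_antisymm ?_ (qpv_nonneg ψ hW (pA a) (pB b))
    have h := qpv_mono_V ψ hW' (pA a) (pB b)
    rw [hzero a b hab] at h
    exact h
  have czero' : ∀ (W : Matrix (Fin 2) (Fin 2) ℂ), W.PosSemidef →
      ((1 : Matrix (Fin 2) (Fin 2) ℂ) - W).PosSemidef →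
      ∀ a b : Fin 3, a ≠ b → exval ψ W (A' a) (B' b) = 0 := by
    intro W hW hW' a b hab
    refine le_antisymm ?_ (qpv_nonneg ψ hW (pA' a) (pB' b))
    have h := qpv_mono_V ψ hW' (pA' a) (pB' b)
    rw [hzero' a b hab] at h
    exact h
  -- complement of B' 0 + B' 1 is PSD
  have pBtop : ((1 : Matrix (Fin dB) (Fin dB) ℂ) - (B' 0 + B' 1)).PosSemidef := by
    rw [show (1 : Matrix (Fin dB) (Fin dB) ℂ) - (B' 0 + B' 1) = B' 2 by rw [← hB'sum]; abel]
    exact pB' 2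
  have pAtop : ((1 : Matrix (Fin dA) (Fin dA) ℂ) - (A 0 + A 1)).PosSemidef := by
    rw [show (1 : Matrix (Fin dA) (Fin dA) ℂ) - (A 0 + A 1) = A 2 by rw [← hAsum]; abel]
    exact pA 2
  -- row bounds
  have row : ∀ (W : Matrix (Fin 2) (Fin 2) ℂ), W.PosSemidef →
      ((1 : Matrix (Fin 2) (Fin 2) ℂ) - W).PosSemidef → ∀ a : Fin 2,
      exval ψ W (A a.castSucc) (B' 0) + exval ψ W (A a.castSucc) (B' 1) ≤
        exval ψ W (A a.castSucc) (B a.castSucc) := by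
    intro W hW hW' a
    have hmb : exval ψ W (A a.castSucc) (B' 0 + B' 1) ≤ exval ψ W (A a.castSucc) 1 :=
      qpv_mono_B ψ (by simpa using pBtop) hW (pA _)
    rw [qpv_add_B] at hmb
    have hexp : exval ψ W (A a.castSucc) 1 = exval ψ W (A a.castSucc) (B a.castSucc) := by
      rw [show (1 : Matrix (Fin dB) (Fin dB) ℂ) = B 0 + B 1 + B 2 from hBsum.symm,
        qpv_add_B, qpv_add_B]
      fin_cases a
      · show exval ψ W (A 0) (B 0) + exval ψ W (A 0) (B 1) + exval ψ W (A 0) (B 2)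
            = exval ψ W (A 0) (B 0)
        rw [czero W hW hW' 0 1 (by decide), czero W hW hW' 0 2 (by decide)]
        ring
      · show exval ψ W (A 1) (B 0) + exval ψ W (A 1) (B 1) + exval ψ W (A 1) (B 2)
            = exval ψ W (A 1) (B 1)
        rw [czero W hW hW' 1 0 (by decide), czero W hW hW' 1 2 (by decide)]
        ring
    linarith
  -- column bounds
  have col : ∀ (W : Matrix (Fin 2) (Fin 2) ℂ), W.PosSemidef →
      ((1 : Matrix (Fin 2) (Fin 2) ℂ) - W).PosSemidef → ∀ b : Fin 2,
      exval ψ W (A 0) (B' b.castSucc) + exval ψ W (A 1) (B' b.castSucc) ≤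
        exval ψ W (A' b.castSucc) (B' b.castSucc) := by
    intro W hW hW' b
    have hmb : exval ψ W (A 0 + A 1) (B' b.castSucc) ≤ exval ψ W 1 (B' b.castSucc) :=
      qpv_mono_A ψ (by simpa using pAtop) hW (pB' _)
    rw [qpv_add_A] at hmb
    have hexp : exval ψ W 1 (B' b.castSucc) = exval ψ W (A' b.castSucc) (B' b.castSucc) := by
      rw [show (1 : Matrix (Fin dA) (Fin dA) ℂ) = A' 0 + A' 1 + A' 2 from hA'sum.symm,
        qpv_add_A, qpv_add_A]
      fin_cases b
      · show exval ψ W (A' 0) (B' 0) + exval ψ W (A' 1) (B' 0) + exval ψ W (A' 2) (B' 0)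
            = exval ψ W (A' 0) (B' 0)
        rw [czero' W hW hW' 1 0 (by decide), czero' W hW hW' 2 0 (by decide)]
        ring
      · show exval ψ W (A' 0) (B' 1) + exval ψ W (A' 1) (B' 1) + exval ψ W (A' 2) (B' 1)
            = exval ψ W (A' 1) (B' 1)
        rw [czero' W hW hW' 0 1 (by decide), czero' W hW hW' 2 1 (by decide)]
        ring
    linarith
  -- key bounds
  have K00 := qpv_key ψ (V 0) (V 1) (V' 0) (V' 1) (pV 0).1 (pV' 0).1 hVsum hV'sum
    (pA 0) (pB' 0)
  have K01 := qpv_key ψ (V 0) (V 1) (V' 1) (V' 0) (pV 0).1 (pV' 1).1 hVsum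
    (by rw [add_comm]; exact hV'sum) (pA 0) (pB' 1)
  have K10 := qpv_key ψ (V 1) (V 0) (V' 0) (V' 1) (pV 1).1 (pV' 0).1
    (by rw [add_comm]; exact hVsum) hV'sum (pA 1) (pB' 0)
  have K11 := qpv_key ψ (V 1) (V 0) (V' 1) (V' 0) (pV 1).1 (pV' 1).1
    (by rw [add_comm]; exact hVsum) (by rw [add_comm]; exact hV'sum) (pA 1) (pB' 1)
  -- error-sum identities
  have E : exval ψ (V 1) (A 0 + A 1) (B 0 + B 1) + exval ψ (V 0) (A 0 + A 1) (B 0 + B 1)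
      = exval ψ 1 (A 0) (B 0) + exval ψ 1 (A 1) (B 1) := by
    rw [← qpv_add_V, show V 1 + V 0 = 1 by rw [add_comm]; exact hVsum,
      qpv_add_A, qpv_add_B, qpv_add_B, hzero 0 1 (by decide), hzero 1 0 (by decide)]
    ring
  have E' : exval ψ (V' 1) (A' 0 + A' 1) (B' 0 + B' 1) + exval ψ (V' 0) (A' 0 + A' 1) (B' 0 + B' 1)
      = exval ψ 1 (A' 0) (B' 0) + exval ψ 1 (A' 1) (B' 1) := by
    rw [← qpv_add_V, show V' 1 + V' 0 = 1 by rw [add_comm]; exact hV'sum,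
      qpv_add_A, qpv_add_B, qpv_add_B, hzero' 0 1 (by decide), hzero' 1 0 (by decide)]
    ring
  have P1 : perr * exval ψ (V 1) (A 0 + A 1) (B 0 + B 1)
      + perr * exval ψ (V 0) (A 0 + A 1) (B 0 + B 1)
      = perr * (exval ψ 1 (A 0) (B 0) + exval ψ 1 (A 1) (B 1)) := by
    rw [← mul_add, E]
  have P2 : perr * exval ψ (V' 1) (A' 0 + A' 1) (B' 0 + B' 1)
      + perr * exval ψ (V' 0) (A' 0 + A' 1) (B' 0 + B' 1)
      = perr * (exval ψ 1 (A' 0) (B' 0) + exval ψ 1 (A' 1) (B' 1)) := by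
    rw [← mul_add, E']
  have row0 := row (V 1) (pV 1) pc1 0
  have row1 := row (V 0) (pV 0) pc0 1
  have col0 := col (V' 1) (pV' 1) pc1' 0
  have col1 := col (V' 0) (pV' 0) pc0' 1
  simp only [Fin.sum_univ_two, show (0 : Fin 2).castSucc = (0 : Fin 3) from rfl,
    show (1 : Fin 2).castSucc = (1 : Fin 3) from rfl] at row0 row1 col0 col1 ⊢
  have htot : perr * ((exval ψ 1 (A 0) (B 0) + exval ψ 1 (A 1) (B 1)) +
      (exval ψ 1 (A' 0) (B' 0) + exval ψ 1 (A' 1) (B' 1))) =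
      perr * (exval ψ 1 (A 0) (B 0) + exval ψ 1 (A 1) (B 1)) +
      perr * (exval ψ 1 (A' 0) (B' 0) + exval ψ 1 (A' 1) (B' 1)) := by ring
  linarith [K00, K01, K10, K11, row0, row1, col0, col1, herr1, herr2, herr1', herr2', P1, P2]

end
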